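/- Let τ be a symmetric positive definite l×l matrix, σ ≠ 0 real, A ∈ ℝˡ, γ ∈ ℝˡ, k > 0. If (τA − kγ)'(k(2+k)σ²τ + (1+k)²(τA)(τA)')⁻¹(τA − kγ) ≤ 1, then the matrix [σ²τ + (τA)(τA)'] − (1+k)⁻²[σ²τ + (τA − kγ)(τA − kγ)'] is positive semidefinite. -/

import Mathlib

open Matrix

lemma vecMulVec_mulVec' {l : ℕ} (v w x : Fin l → ℝ) :
    vecMulVec v w *ᵥ x = (w ⬝ᵥ x) • v := by
  ext i
  simp [Matrix.mulVec, vecMulVec_apply, dotProduct, Finset.mul_sum, mul_assoc, mul_comm,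
    mul_left_comm]

lemma vecMulVec_isHermitian' {l : ℕ} (v : Fin l → ℝ) :
    (vecMulVec v v).IsHermitian := by
  ext i j
  simp [vecMulVec_apply, conjTranspose_apply, mul_comm]

lemma herm_smul' {l : ℕ} {M : Matrix (Fin l) (Fin l) ℝ} (hM : M.IsHermitian) (c : ℝ) :
    (c • M).IsHermitian := by
  unfold Matrix.IsHermitian at *
  rw [conjTranspose_smul, hM]
  simp

lemma herm_symm {l : ℕ} {M : Matrix (Fin l) (Fin l) ℝ} (hM : M.IsHermitian)
    (a b : Fin l → ℝ) : a ⬝ᵥ M *ᵥ b = b ⬝ᵥ M *ᵥ a := by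
  rw [Matrix.dotProduct_mulVec, ← Matrix.mulVec_transpose]
  have : Mᵀ = M := by ext i j; simpa using congrArg (fun N => N i j) hM
  rw [this, dotProduct_comm]

lemma cs_real (α β δ : ℝ) (hα : 0 ≤ α) (hδ : 0 ≤ δ)
    (key : ∀ t : ℝ, 0 ≤ α + 2 * t * β + t ^ 2 * δ) : β ^ 2 ≤ α * δ := by
  rcases hδ.eq_or_lt with hδ0 | hδ0
  · have hβ0 : β = 0 := by
      by_contra hβ0
      have h1 := key (-(α + 1) / (2 * β))
      rw [← hδ0] at h1
      have h2 : 2 * (-(α + 1) / (2 * β)) * β = -(α + 1) := by field_simp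
      rw [h2] at h1
      linarith
    rw [hβ0, ← hδ0]
    simp
  · have h1 := key (-β / δ)
    have e1 : α + 2 * (-β / δ) * β + (-β / δ) ^ 2 * δ = α - β ^ 2 / δ := by
      field_simp; ring
    rw [e1] at h1
    have h2 : β ^ 2 / δ ≤ α := by linarith
    have := mul_le_mul_of_nonneg_right h2 hδ
    rwa [div_mul_cancel₀ _ hδ0.ne'] at this

lemma psd_cs {l : ℕ} {M : Matrix (Fin l) (Fin l) ℝ} (hM : M.PosSemidef)
    (a b : Fin l → ℝ) :
    (a ⬝ᵥ M *ᵥ b) ^ 2 ≤ (a ⬝ᵥ M *ᵥ a) * (b ⬝ᵥ M *ᵥ b) := by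
  refine cs_real _ _ _ (by simpa using hM.dotProduct_mulVec_nonneg a) (by simpa using hM.dotProduct_mulVec_nonneg b) fun t => ?_
  have h0 := hM.dotProduct_mulVec_nonneg (a + t • b)
  simp only [star_trivial, Matrix.mulVec_add, Matrix.mulVec_smul, dotProduct_add,
    add_dotProduct, smul_dotProduct, dotProduct_smul, smul_eq_mul] at h0
  rw [herm_symm hM.1 b a] at h0
  nlinarith [h0]

lemma pd_sub_vecMulVec {l : ℕ} {M : Matrix (Fin l) (Fin l) ℝ} (hM : M.PosDef)
    (v : Fin l → ℝ) (h : v ⬝ᵥ M⁻¹ *ᵥ v ≤ 1) :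
    (M - vecMulVec v v).PosSemidef := by
  have hdet : IsUnit M.det := isUnit_iff_ne_zero.mpr hM.det_pos.ne'
  set a : Fin l → ℝ := M⁻¹ *ᵥ v with ha
  have hMa : M *ᵥ a = v := by
    rw [ha, Matrix.mulVec_mulVec, Matrix.mul_nonsing_inv _ hdet, Matrix.one_mulVec]
  have haMa : a ⬝ᵥ M *ᵥ a ≤ 1 := by
    rw [hMa, dotProduct_comm]; exact h
  refine .of_dotProduct_mulVec_nonneg (hM.1.sub (vecMulVec_isHermitian' v)) fun x => ?_
  simp only [star_trivial, Matrix.sub_mulVec, dotProduct_sub, vecMulVec_mulVec',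
    dotProduct_smul, smul_eq_mul]
  have hvx : v ⬝ᵥ x = a ⬝ᵥ M *ᵥ x := by
    rw [← hMa, dotProduct_comm, herm_symm hM.1 x a]
  have hcs := psd_cs hM.posSemidef a x
  have hxx : 0 ≤ x ⬝ᵥ M *ᵥ x := by simpa using hM.posSemidef.dotProduct_mulVec_nonneg x
  have haa : 0 ≤ a ⬝ᵥ M *ᵥ a := by simpa using hM.posSemidef.dotProduct_mulVec_nonneg a
  have hxv : x ⬝ᵥ v = v ⬝ᵥ x := dotProduct_comm x v
  rw [hxv, hvx]
  nlinarith

theorem stmt_13 {l : ℕ} (τ : Matrix (Fin l) (Fin l) ℝ) (hτ : τ.PosDef)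
    (σ : ℝ) (hσ : σ ≠ 0) (A γ : Fin l → ℝ) (k : ℝ) (hk : 0 < k)
    (h : (τ.mulVec A - k • γ) ⬝ᵥ
        ((k * (2 + k) * σ ^ 2) • τ +
          ((1 + k) ^ 2) • vecMulVec (τ.mulVec A) (τ.mulVec A))⁻¹.mulVec
          (τ.mulVec A - k • γ) ≤ 1) :
    ((σ ^ 2 • τ + vecMulVec (τ.mulVec A) (τ.mulVec A)) -
      ((1 + k) ^ 2)⁻¹ •
        (σ ^ 2 • τ +
          vecMulVec (τ.mulVec A - k • γ) (τ.mulVec A - k • γ))).PosSemidef := by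
  set u := τ.mulVec A with hu
  set v := τ.mulVec A - k • γ with hv
  set M := (k * (2 + k) * σ ^ 2) • τ + ((1 + k) ^ 2) • vecMulVec u u with hM
  have hc : (0:ℝ) < (1 + k) ^ 2 := by positivity
  have hMpd : M.PosDef := by
    have hpos : 0 < k * (2 + k) * σ ^ 2 := by positivity
    have h1 : ((k * (2 + k) * σ ^ 2) • τ).PosDef := by
      refine .of_dotProduct_mulVec_pos (herm_smul' hτ.1 _) fun x hx => ?_
      simp only [star_trivial, Matrix.smul_mulVec, dotProduct_smul, smul_eq_mul]
      exact mul_pos hpos (by simpa using hτ.dotProduct_mulVec_pos hx)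
    have h2 : (((1 + k) ^ 2) • vecMulVec u u).PosSemidef := by
      refine .of_dotProduct_mulVec_nonneg (herm_smul' (vecMulVec_isHermitian' u) _) fun x => ?_
      simp only [star_trivial, Matrix.smul_mulVec, dotProduct_smul, vecMulVec_mulVec',
        smul_eq_mul]
      have hud : x ⬝ᵥ u = u ⬝ᵥ x := dotProduct_comm x u
      rw [hud]
      exact mul_nonneg hc.le (mul_self_nonneg _)
    exact h1.add_posSemidef h2
  have hsub := pd_sub_vecMulVec hMpd v h
  have heq : ((σ ^ 2 • τ + vecMulVec u u) -
      ((1 + k) ^ 2)⁻¹ • (σ ^ 2 • τ + vecMulVec v v)) =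
      ((1 + k) ^ 2)⁻¹ • (M - vecMulVec v v) := by
    rw [hM]
    ext i j
    simp only [Matrix.sub_apply, Matrix.add_apply, Matrix.smul_apply, smul_eq_mul]
    field_simp
    ring
  rw [heq]
  refine .of_dotProduct_mulVec_nonneg (herm_smul' hsub.1 _) fun x => ?_
  simp only [star_trivial, Matrix.smul_mulVec, dotProduct_smul, smul_eq_mul]
  exact mul_nonneg (by positivity) (by simpa using hsub.dotProduct_mulVec_nonneg x)
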